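/- If the classifier is consistent and P_X ≠ P_Y, then the test rejecting when L̂_{m_n} − 1/2 < −√(−2 log(α)/m_n) is consistent: the probability of rejection converges to 1 as n → ∞ (with m_n → ∞). -/

import Mathlib

open MeasureTheory Filter
open scoped Topology ENNReal

/-- If the classifier is consistent and the two distributions differ (so that the Bayes
error satisfies `L* < 1/2`), the test rejecting when
`L̂_{m_n} − 1/2 < −√(−2 log α / m_n)` is consistent: its rejection probability tends
to 1 as `n → ∞`. -/
theorem binomial_test_consistent
    {Ω : Type*} [MeasurableSpace Ω] (μ : Measure Ω) [IsProbabilityMeasure μ]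
    (m : ℕ → ℕ) (Lhat L : ℕ → Ω → ℝ) (Lstar : ℝ) (α : ℝ)
    (hα0 : 0 < α) (hα1 : α < 1)
    (hm : Tendsto m atTop atTop)
    (hge : ∀ n ω, Lstar ≤ L n ω)
    (hLstar : Lstar < 1/2)
    (hcons : ∀ δ : ℝ, 0 < δ →
      Tendsto (fun n => μ {ω | |L n ω - Lstar| > δ}) atTop (𝓝 0))
    (hhoeff : ∀ n, ∀ δ : ℝ, 0 < δ →
      μ {ω | |Lhat n ω - L n ω| > δ}
        ≤ ENNReal.ofReal (2 * Real.exp (-2 * (m n : ℝ) * δ ^ 2))) :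
    Tendsto (fun n =>
        μ {ω | Lhat n ω - 1/2 < -Real.sqrt (-(2 * Real.log α) / (m n : ℝ))})
      atTop (𝓝 1) := by
  set δ : ℝ := (1/2 - Lstar)/4 with hδdef
  have hδ : 0 < δ := by
    have : 0 < 1/2 - Lstar := by linarith
    positivity
  set t : ℕ → ℝ := fun n => Real.sqrt (-(2 * Real.log α) / (m n : ℝ)) with htdef
  have hmr : Tendsto (fun n => (m n : ℝ)) atTop atTop :=
    tendsto_natCast_atTop_atTop.comp hm
  -- t → 0
  have ht : Tendsto t atTop (𝓝 0) := by
    have h1 : Tendsto (fun n => (-(2 * Real.log α)) / (m n : ℝ)) atTop (𝓝 0) :=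
      Tendsto.div_atTop tendsto_const_nhds hmr
    have h2 := (Real.continuous_sqrt.tendsto 0).comp h1
    simpa only [htdef, Real.sqrt_zero, Function.comp_def] using h2
  -- Hoeffding bound tends to 0
  have hben : Tendsto (fun n => ENNReal.ofReal (2 * Real.exp (-2 * (m n : ℝ) * δ ^ 2)))
      atTop (𝓝 0) := by
    have hneg : (-2 * δ ^ 2 : ℝ) < 0 := by nlinarith
    have hbot : Tendsto (fun n => -2 * (m n : ℝ) * δ ^ 2) atTop atBot := by
      have := hmr.atTop_mul_const_of_neg hneg
      refine this.congr (fun n => by ring)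
    have hexp : Tendsto (fun n => 2 * Real.exp (-2 * (m n : ℝ) * δ ^ 2)) atTop (𝓝 0) := by
      have := (Real.tendsto_exp_atBot.comp hbot).const_mul 2
      simpa using this
    have := ENNReal.tendsto_ofReal hexp
    simpa using this
  -- complement is eventually contained in the union of two bad events
  have hsub : ∀ᶠ n in atTop,
      {ω | ¬ (Lhat n ω - 1/2 < -t n)} ⊆
        {ω | |L n ω - Lstar| > δ} ∪ {ω | |Lhat n ω - L n ω| > δ} := by
    have htlt : ∀ᶠ n in atTop, t n < δ := ht.eventually (eventually_lt_nhds hδ)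
    filter_upwards [htlt] with n htn ω hω
    by_contra hc
    simp only [Set.mem_union, Set.mem_setOf_eq, not_or, not_lt] at hc
    obtain ⟨h1, h2⟩ := hc
    have a1 := abs_le.mp h1
    have a2 := abs_le.mp h2
    have ht0 : 0 ≤ t n := Real.sqrt_nonneg _
    have hδeq : δ = (1/2 - Lstar)/4 := rfl
    exact hω (by linarith [a1.2, a2.2])
  -- complement measure tends to 0
  have hcompl : Tendsto
      (fun n => μ {ω | ¬ (Lhat n ω - 1/2 < -t n)}) atTop (𝓝 0) := by
    have hub : ∀ᶠ n in atTop,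
        μ {ω | ¬ (Lhat n ω - 1/2 < -t n)} ≤
          μ {ω | |L n ω - Lstar| > δ} +
            ENNReal.ofReal (2 * Real.exp (-2 * (m n : ℝ) * δ ^ 2)) := by
      filter_upwards [hsub] with n hn
      calc μ {ω | ¬ (Lhat n ω - 1/2 < -t n)}
          ≤ μ ({ω | |L n ω - Lstar| > δ} ∪ {ω | |Lhat n ω - L n ω| > δ}) :=
            measure_mono hn
        _ ≤ μ {ω | |L n ω - Lstar| > δ} + μ {ω | |Lhat n ω - L n ω| > δ} :=
            measure_union_le _ _
        _ ≤ _ := add_le_add le_rfl (hhoeff n δ hδ)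
    have hlim : Tendsto (fun n => μ {ω | |L n ω - Lstar| > δ} +
        ENNReal.ofReal (2 * Real.exp (-2 * (m n : ℝ) * δ ^ 2))) atTop (𝓝 0) := by
      simpa using (hcons δ hδ).add hben
    exact tendsto_of_tendsto_of_tendsto_of_le_of_le' tendsto_const_nhds hlim
      (Eventually.of_forall fun n => zero_le) hub
  -- conclude
  have hlb : ∀ n, 1 - μ {ω | ¬ (Lhat n ω - 1/2 < -t n)} ≤
      μ {ω | Lhat n ω - 1/2 < -t n} := by
    intro n
    rw [tsub_le_iff_right]
    have : (1 : ℝ≥0∞) = μ Set.univ := (measure_univ (μ := μ)).symm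
    rw [this]
    have huniv : (Set.univ : Set Ω) ⊆
        {ω | Lhat n ω - 1/2 < -t n} ∪ {ω | ¬ (Lhat n ω - 1/2 < -t n)} := by
      intro ω _
      by_cases h : Lhat n ω - 1/2 < -t n
      · exact Or.inl h
      · exact Or.inr h
    exact (measure_mono huniv).trans (measure_union_le _ _)
  have hlower : Tendsto (fun n => 1 - μ {ω | ¬ (Lhat n ω - 1/2 < -t n)}) atTop (𝓝 1) := by
    have := ENNReal.Tendsto.sub (tendsto_const_nhds (x := (1 : ℝ≥0∞))) hcompl
      (Or.inl ENNReal.one_ne_top)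
    simpa using this
  refine tendsto_of_tendsto_of_tendsto_of_le_of_le hlower tendsto_const_nhds hlb
    (fun n => prob_le_one)
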